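/- Let k ≥ 1 be an integer and let H be a bipartite simple graph with parts X and Y in which every vertex has degree at least k. Let i be an integer with 0 ≤ i ≤ k−1, let S be a set of at most i vertices of H, and let x ∈ X with x ∉ S. Then H contains a simple path of length exactly 2(k−i)−1 that starts at x, ends at a vertex of Y, and avoids S entirely (no vertex of the path belongs to S). -/

import Mathlib

/-- In a bipartite graph `H` with parts `X` and `Y` in which every vertex has
degree at least `k`, for any `0 ≤ i ≤ k - 1`, any set `S` of at most `i`
vertices, and any `x ∈ X \ S`, there is a simple path of length exactly
`2(k - i) - 1` starting at `x`, ending in `Y`, and avoiding `S`. -/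
theorem exists_long_path_avoiding {V : Type*} [Fintype V] [DecidableEq V]
    (H : SimpleGraph V) [DecidableRel H.Adj]
    (X Y : Finset V) (hcover : ∀ v : V, v ∈ X ∨ v ∈ Y) (hdisj : Disjoint X Y)
    (hbip : ∀ a b : V, H.Adj a b → (a ∈ X ∧ b ∈ Y) ∨ (a ∈ Y ∧ b ∈ X))
    (k : ℕ) (hk : 1 ≤ k) (hdeg : ∀ v : V, k ≤ H.degree v)
    (i : ℕ) (hi : i ≤ k - 1) (S : Finset V) (hS : S.card ≤ i)
    (x : V) (hx : x ∈ X) (hxS : x ∉ S) :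
    ∃ y ∈ Y, ∃ p : H.Walk x y, p.IsPath ∧ p.length = 2 * (k - i) - 1 ∧
      ∀ s ∈ S, s ∉ p.support := by
  -- a vertex not in X is in Y and vice versa
  have hXY : ∀ v : V, v ∈ X → v ∉ Y := fun v hv => Finset.disjoint_left.mp hdisj hv
  have hYX : ∀ v : V, v ∈ Y → v ∉ X := fun v hv => Finset.disjoint_right.mp hdisj hv
  have hadjX : ∀ a b : V, H.Adj a b → a ∈ X → b ∈ Y := by
    intro a b hab ha
    rcases hbip a b hab with ⟨_, hb⟩ | ⟨ha', _⟩
    · exact hb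
    · exact absurd ha' (hXY a ha)
  have hadjY : ∀ a b : V, H.Adj a b → a ∈ Y → b ∈ X := by
    intro a b hab ha
    rcases hbip a b hab with ⟨ha', _⟩ | ⟨_, hb⟩
    · exact absurd ha (hXY a ha')
    · exact hb
  -- existence of a neighbor avoiding a small forbidden set
  have hnb : ∀ (v : V) (F : Finset V), F.card < k → ∃ w, H.Adj v w ∧ w ∉ F := by
    intro v F hF
    have hlt : F.card < (H.neighborFinset v).card := by
      rw [SimpleGraph.card_neighborFinset_eq_degree]
      exact lt_of_lt_of_le hF (hdeg v)
    have hns : ¬ (H.neighborFinset v ⊆ F) := fun h => absurd (Finset.card_le_card h) (by omega)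
    obtain ⟨w, hw1, hw2⟩ := Finset.not_subset.mp hns
    exact ⟨w, (SimpleGraph.mem_neighborFinset H v w).mp hw1, hw2⟩
  have hik : i < k := by omega
  -- main induction
  have key : ∀ t : ℕ, 1 ≤ t → t ≤ k - i →
      ∃ y ∈ Y, ∃ p : H.Walk x y, p.IsPath ∧ p.length = 2 * t - 1 ∧
        (∀ s ∈ S, s ∉ p.support) ∧
        (p.support.toFinset ∩ X).card = t ∧ (p.support.toFinset ∩ Y).card = t := by
    intro t
    induction t with
    | zero => omega
    | succ t IH =>
      intro _ ht
      rcases Nat.eq_zero_or_pos t with h0 | hpos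
      · -- base case t+1 = 1
        subst h0
        obtain ⟨y, hxy, hyS⟩ := hnb x S (lt_of_le_of_lt hS hik)
        have hyY : y ∈ Y := hadjX x y hxy hx
        refine ⟨y, hyY, SimpleGraph.Walk.cons hxy SimpleGraph.Walk.nil, ?_, ?_, ?_, ?_, ?_⟩
        · rw [SimpleGraph.Walk.cons_isPath_iff]
          refine ⟨SimpleGraph.Walk.IsPath.nil, ?_⟩
          simp [hxy.ne]
        · simp
        · intro s hs
          simp only [SimpleGraph.Walk.support_cons, SimpleGraph.Walk.support_nil,
            List.mem_cons, List.mem_singleton]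
          rintro (rfl | rfl | h)
          · exact hxS hs
          · exact hyS hs
          · exact (List.not_mem_nil h)
        · have : (SimpleGraph.Walk.cons hxy (SimpleGraph.Walk.nil : H.Walk y y)).support.toFinset
              ∩ X = {x} := by
            ext v
            simp only [SimpleGraph.Walk.support_cons, SimpleGraph.Walk.support_nil,
              List.toFinset_cons, List.toFinset_nil, Finset.mem_inter, Finset.mem_insert,
              Finset.mem_singleton, insert_empty_eq]
            constructor
            · rintro ⟨rfl | rfl, hv⟩
              · rfl
              · exact absurd hv (hYX v hyY)
            · rintro rfl; exact ⟨Or.inl rfl, hx⟩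
          rw [this]; simp
        · have : (SimpleGraph.Walk.cons hxy (SimpleGraph.Walk.nil : H.Walk y y)).support.toFinset
              ∩ Y = {y} := by
            ext v
            simp only [SimpleGraph.Walk.support_cons, SimpleGraph.Walk.support_nil,
              List.toFinset_cons, List.toFinset_nil, Finset.mem_inter, Finset.mem_insert,
              Finset.mem_singleton, insert_empty_eq]
            constructor
            · rintro ⟨rfl | rfl, hv⟩
              · exact absurd hv (hXY v hx)
              · rfl
            · rintro rfl; exact ⟨Or.inr rfl, hyY⟩
          rw [this]; simp
      · -- inductive step
        obtain ⟨y, hyY, p, hp, hplen, hpS, hpX, hpY⟩ := IH hpos (by omega)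
        -- extend by a new vertex x' ∈ X
        have hcard1 : (S ∪ p.support.toFinset ∩ X).card < k := by
          calc (S ∪ p.support.toFinset ∩ X).card ≤ S.card + (p.support.toFinset ∩ X).card :=
                Finset.card_union_le _ _
            _ ≤ i + t := by omega
            _ < k := by omega
        obtain ⟨x', hyx', hx'⟩ := hnb y (S ∪ p.support.toFinset ∩ X) hcard1
        simp only [Finset.mem_union, Finset.mem_inter, List.mem_toFinset, not_or, not_and] at hx'
        obtain ⟨hx'S, hx'p⟩ := hx'
        have hx'X : x' ∈ X := hadjY y x' hyx' hyY
        have hx'sup : x' ∉ p.support := fun h => hx'p h hx'X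
        set p1 : H.Walk x x' := p.concat hyx' with hp1def
        have hp1 : p1.IsPath := by
          rw [SimpleGraph.Walk.isPath_def, hp1def, SimpleGraph.Walk.support_concat]
          rw [List.nodup_append]
          simpa using ⟨(SimpleGraph.Walk.isPath_def p).mp hp, fun a ha h => hx'sup (h ▸ ha)⟩
        have hp1sup : p1.support = p.support ++ [x'] := by
          rw [hp1def, SimpleGraph.Walk.support_concat]
        -- extend by a new vertex y' ∈ Y
        have hcard2 : (S ∪ p.support.toFinset ∩ Y).card < k := by
          calc (S ∪ p.support.toFinset ∩ Y).card ≤ S.card + (p.support.toFinset ∩ Y).card :=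
                Finset.card_union_le _ _
            _ ≤ i + t := by omega
            _ < k := by omega
        obtain ⟨y', hx'y', hy'⟩ := hnb x' (S ∪ p.support.toFinset ∩ Y) hcard2
        simp only [Finset.mem_union, Finset.mem_inter, List.mem_toFinset, not_or, not_and] at hy'
        obtain ⟨hy'S, hy'p⟩ := hy'
        have hy'Y : y' ∈ Y := hadjX x' y' hx'y' hx'X
        have hy'sup : y' ∉ p.support := fun h => hy'p h hy'Y
        have hy'ne : y' ≠ x' := hx'y'.ne'
        have hy'sup1 : y' ∉ p1.support := by
          rw [hp1sup]
          simp only [List.mem_append, List.mem_singleton, not_or]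
          exact ⟨hy'sup, hx'y'.ne'⟩
        set p2 : H.Walk x y' := p1.concat hx'y' with hp2def
        have hp2 : p2.IsPath := by
          rw [SimpleGraph.Walk.isPath_def, hp2def, SimpleGraph.Walk.support_concat]
          rw [List.nodup_append]
          simpa using ⟨(SimpleGraph.Walk.isPath_def p1).mp hp1, fun a ha h => hy'sup1 (h ▸ ha)⟩
        have hp2sup : p2.support = p.support ++ [x'] ++ [y'] := by
          rw [hp2def, SimpleGraph.Walk.support_concat, hp1sup]
        have hp2len : p2.length = 2 * (t + 1) - 1 := by
          have h1 : p1.length = p.length + 1 := by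
            rw [hp1def, SimpleGraph.Walk.length_concat]
          have h2 : p2.length = p1.length + 1 := by
            rw [hp2def, SimpleGraph.Walk.length_concat]
          omega
        have htoF : p2.support.toFinset = insert y' (insert x' p.support.toFinset) := by
          rw [hp2sup]
          ext v
          simp [or_comm, or_assoc, or_left_comm]
        refine ⟨y', hy'Y, p2, hp2, hp2len, ?_, ?_, ?_⟩
        · intro s hs
          rw [hp2sup]
          simp only [List.mem_append, List.mem_singleton, not_or]
          exact ⟨⟨hpS s hs, fun h => hx'S (h ▸ hs)⟩, fun h => hy'S (h ▸ hs)⟩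
        · have : p2.support.toFinset ∩ X = insert x' (p.support.toFinset ∩ X) := by
            rw [htoF]
            ext v
            simp only [Finset.mem_inter, Finset.mem_insert, List.mem_toFinset]
            constructor
            · rintro ⟨rfl | rfl | hv, hvX⟩
              · exact absurd hvX (hYX v hy'Y)
              · exact Or.inl rfl
              · exact Or.inr ⟨by simpa using hv, hvX⟩
            · rintro (rfl | ⟨hv, hvX⟩)
              · exact ⟨Or.inr (Or.inl rfl), hx'X⟩
              · exact ⟨Or.inr (Or.inr (by simpa using hv)), hvX⟩
          rw [this, Finset.card_insert_of_notMem, hpX]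
          simp only [Finset.mem_inter, List.mem_toFinset, not_and]
          exact fun h _ => hx'sup h
        · have : p2.support.toFinset ∩ Y = insert y' (p.support.toFinset ∩ Y) := by
            rw [htoF]
            ext v
            simp only [Finset.mem_inter, Finset.mem_insert, List.mem_toFinset]
            constructor
            · rintro ⟨rfl | rfl | hv, hvY⟩
              · exact Or.inl rfl
              · exact absurd hvY (hXY v hx'X)
              · exact Or.inr ⟨by simpa using hv, hvY⟩
            · rintro (rfl | ⟨hv, hvY⟩)
              · exact ⟨Or.inl rfl, hy'Y⟩
              · exact ⟨Or.inr (Or.inr (by simpa using hv)), hvY⟩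
          rw [this, Finset.card_insert_of_notMem, hpY]
          simp only [Finset.mem_inter, List.mem_toFinset, not_and]
          exact fun h _ => hy'sup h
  obtain ⟨y, hyY, p, hp, hplen, hpS, _, _⟩ := key (k - i) (by omega) le_rfl
  exact ⟨y, hyY, p, hp, hplen, hpS⟩
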